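/- The preference P_h : xz ≻ ∅ (over contracts x and z with distinct doctors, both individually unacceptable) is pseudo-substitutable but not bilaterally substitutable: taking Y = ∅, we have z ∉ C(∅ ∪ {z}) yet z ∈ C(∅ ∪ {x, z}) with neither doctor in Y_D. -/
import Mathlib


inductive Ctr | x | z
  deriving DecidableEq

open Ctr

/-- Doctors of the two contracts (distinct). -/
def doc : Ctr → Fin 2
  | x => 0
  | z => 1

/-- Choice function of `P_h : xz ≻ ∅`. -/
def CP (S : Finset Ctr) : Finset Ctr :=
  if x ∈ S ∧ z ∈ S then {x, z} else ∅

def Substitutable (C : Finset Ctr → Finset Ctr) : Prop :=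
  ∀ (S : Finset Ctr) (w w' : Ctr), w ∈ S → w' ∈ S → w ≠ w' → w' ∈ C S → w' ∈ C (S.erase w)

def SubPref (C' C : Finset Ctr → Finset Ctr) : Prop :=
  (∀ S : Finset Ctr, C' S = S → C S = S) ∧
  (∀ (S : Finset Ctr) (w : Ctr), C' S = S → w ∉ S → w ∈ C (insert w S) → w ∈ C' (insert w S))

/-- Bilateral substitutability: there are no contracts `w, c` and set `Y` with
`doc w, doc c ∉ Y_D`, `c ∉ C(Y ∪ {c})` and `c ∈ C(Y ∪ {w, c})`. -/
def BilateralSubstitutable (C : Finset Ctr → Finset Ctr) : Prop :=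
  ¬ ∃ (w c : Ctr) (Y : Finset Ctr),
      doc w ∉ Y.image doc ∧ doc c ∉ Y.image doc ∧
      c ∉ C (insert c Y) ∧ c ∈ C (insert c (insert w Y))

/-- `P_h : xz ≻ ∅` is pseudo-substitutable but not bilaterally substitutable:
with `Y = ∅`, `z ∉ C({z})` yet `z ∈ C({x, z})`. -/
theorem CP_pseudo_not_bilateral :
    (∃ C' : Finset Ctr → Finset Ctr, Substitutable C' ∧ SubPref C' CP) ∧
    ¬ BilateralSubstitutable CP ∧
    z ∉ CP (insert z ∅) ∧ z ∈ CP (insert z (insert x ∅)) := by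
  refine ⟨⟨fun _ => ∅, ?_, ?_, ?_⟩, ?_, ?_, ?_⟩
  · intro S w w' _ _ _ h; simp at h
  · intro S hS
    have : S = ∅ := hS.symm
    subst this; decide
  · intro S w hS hw hmem
    have : S = ∅ := hS.symm
    subst this
    exfalso
    revert hmem
    cases w <;> decide
  · intro hbs
    exact hbs ⟨x, z, ∅, by decide, by decide, by decide, by decide⟩
  · decide
  · decide
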